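/- arXiv:1803.03550 — 2 statements merged into one kernel-verified Lean document; each statement's English description precedes it below -/
import Mathlib

section
/- Farthest-point sufficiency lemma: fix ε ≥ 0, a polyline P with parametrization π, indices h < i, and parameters s ≤ ŝ ≤ t ≤ t̂ such that: (a) the subcurve P[s, ŝ] is a line segment lying entirely within distance ε of p_h; (b) the subcurve P[t, t̂] is a line segment lying entirely within distance ε of p_i; and (c) the segment from p_h to p_i has Fréchet distance at most ε to P[s, t]. Then the segment from p_h to p_i has Fréchet distance at most ε to P[ŝ, t̂]. -/
open Set

abbrev E2 := EuclideanSpace ℝ (Fin 2)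

/-- A reparametrization: a continuous, monotone nondecreasing map of `[0,1]`
onto `[0,1]`. -/
def IsRepar (α : ℝ → ℝ) : Prop :=
  ContinuousOn α (Icc 0 1) ∧ MonotoneOn α (Icc 0 1) ∧ α '' Icc 0 1 = Icc 0 1

/-- The Fréchet distance between two curves parametrized over `[0,1]`:
the infimum over pairs of reparametrizations of the sup-distance. -/
noncomputable def frechetDist (f g : ℝ → E2) : ℝ :=
  sInf {r : ℝ | 0 ≤ r ∧ ∃ α β : ℝ → ℝ, IsRepar α ∧ IsRepar β ∧
    ∀ t ∈ Icc (0:ℝ) 1, ‖f (α t) - g (β t)‖ ≤ r}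

/-- The constant-speed parametrization of the segment from `a` to `b`. -/
noncomputable def segCurve (a b : E2) : ℝ → E2 := fun u => a + u • (b - a)

/-- The piecewise-linear curve through `p 0, p 1, …`, parametrized so that
vertex `p k` is reached at time `k`. -/
noncomputable def polyParam (p : ℕ → E2) (t : ℝ) : E2 :=
  p ⌊t⌋₊ + (t - (⌊t⌋₊ : ℝ)) • (p (⌊t⌋₊ + 1) - p ⌊t⌋₊)

/-- The subcurve of the polyline between parameters `s` and `t`,
reparametrized over `[0,1]`. -/
noncomputable def subcurve (p : ℕ → E2) (s t : ℝ) : ℝ → E2 :=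
  fun u => polyParam p (s + u * (t - s))

/-- The polygonal curve on the subsequence `p (j 0), …, p (j k)` of vertices
(a simplification with `k` links), reparametrized over `[0,1]`. -/
noncomputable def simplCurve (p : ℕ → E2) (j : ℕ → ℕ) (k : ℕ) : ℝ → E2 :=
  fun u => polyParam (fun m => p (j (min m k))) (u * k)

-- aux lemmas
lemma isRepar_id : IsRepar (fun u => u) :=
  ⟨continuous_id.continuousOn, (monotone_id).monotoneOn _, image_id _⟩

lemma IsRepar.mem_Icc {α : ℝ → ℝ} (hα : IsRepar α) {x : ℝ} (hx : x ∈ Icc (0:ℝ) 1) :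
    α x ∈ Icc (0:ℝ) 1 := by
  have : α x ∈ α '' Icc 0 1 := ⟨x, hx, rfl⟩
  rwa [hα.2.2] at this

lemma IsRepar.map_zero {α : ℝ → ℝ} (hα : IsRepar α) : α 0 = 0 := by
  obtain ⟨x₀, hx₀, hx₀'⟩ : (0:ℝ) ∈ α '' Icc 0 1 := by rw [hα.2.2]; exact ⟨le_refl _, zero_le_one⟩
  have h1 : α 0 ≤ α x₀ := hα.2.1 ⟨le_refl _, zero_le_one⟩ hx₀ hx₀.1
  have h2 := hα.mem_Icc (x := 0) ⟨le_refl _, zero_le_one⟩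
  exact le_antisymm (hx₀' ▸ h1) h2.1

lemma IsRepar.map_one {α : ℝ → ℝ} (hα : IsRepar α) : α 1 = 1 := by
  obtain ⟨x₀, hx₀, hx₀'⟩ : (1:ℝ) ∈ α '' Icc 0 1 := by rw [hα.2.2]; exact ⟨zero_le_one, le_refl _⟩
  have h1 : α x₀ ≤ α 1 := hα.2.1 hx₀ ⟨zero_le_one, le_refl _⟩ hx₀.2
  have h2 := hα.mem_Icc (x := 1) ⟨zero_le_one, le_refl _⟩
  exact le_antisymm h2.2 (hx₀' ▸ h1)

lemma isRepar_of_endpoints {W : ℝ → ℝ} (hc : ContinuousOn W (Icc 0 1))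
    (hm : MonotoneOn W (Icc 0 1)) (h0 : W 0 = 0) (h1 : W 1 = 1) : IsRepar W := by
  refine ⟨hc, hm, le_antisymm ?_ ?_⟩
  · rintro _ ⟨x, hx, rfl⟩
    exact ⟨h0 ▸ hm ⟨le_refl _, zero_le_one⟩ hx hx.1, h1 ▸ hm hx ⟨zero_le_one, le_refl _⟩ hx.2⟩
  · have := intermediate_value_Icc (zero_le_one (α := ℝ)) hc
    rwa [h0, h1] at this

lemma frechetDist_le {f g : ℝ → E2} {r : ℝ} (hr : 0 ≤ r) (α β : ℝ → ℝ)
    (hα : IsRepar α) (hβ : IsRepar β)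
    (hb : ∀ t ∈ Icc (0:ℝ) 1, ‖f (α t) - g (β t)‖ ≤ r) :
    frechetDist f g ≤ r :=
  csInf_le ⟨0, fun _ hx => hx.1⟩ ⟨hr, α, β, hα, hβ, hb⟩

lemma seg_norm_le (a b c : E2) {v v₀ v₁ : ℝ} (hv : v ∈ Icc v₀ v₁) :
    ‖segCurve a b v - c‖ ≤ max ‖segCurve a b v₀ - c‖ ‖segCurve a b v₁ - c‖ := by
  rcases eq_or_lt_of_le (hv.1.trans hv.2 : v₀ ≤ v₁) with he | hlt
  · have : v = v₀ := le_antisymm (he ▸ hv.2) hv.1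
    rw [this]; exact le_max_left _ _
  · set l : ℝ := (v - v₀) / (v₁ - v₀) with hl
    have hl0 : 0 ≤ l := div_nonneg (by linarith [hv.1]) (by linarith)
    have hl1 : l ≤ 1 := (div_le_one (by linarith)).2 (by linarith [hv.2])
    have hml : l * (v₁ - v₀) = v - v₀ := div_mul_cancel₀ _ (ne_of_gt (by linarith))
    have hveq : v = (1 - l) * v₀ + l * v₁ := by linear_combination -hml
    have hid : segCurve a b v - c
        = (1 - l) • (segCurve a b v₀ - c) + l • (segCurve a b v₁ - c) := by
      simp only [segCurve]; rw [hveq]; module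
    rw [hid]
    calc ‖(1 - l) • (segCurve a b v₀ - c) + l • (segCurve a b v₁ - c)‖
        ≤ ‖(1 - l) • (segCurve a b v₀ - c)‖ + ‖l • (segCurve a b v₁ - c)‖ := norm_add_le _ _
      _ = (1 - l) * ‖segCurve a b v₀ - c‖ + l * ‖segCurve a b v₁ - c‖ := by
          rw [norm_smul, norm_smul, Real.norm_eq_abs, Real.norm_eq_abs,
            abs_of_nonneg (by linarith), abs_of_nonneg hl0]
      _ ≤ (1 - l) * max ‖segCurve a b v₀ - c‖ ‖segCurve a b v₁ - c‖
          + l * max ‖segCurve a b v₀ - c‖ ‖segCurve a b v₁ - c‖ := by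
          gcongr
          · exact le_max_left _ _
          · exact le_max_right _ _
      _ = _ := by ring
lemma frechet_set_nonempty (p : ℕ → E2) (a b : E2) {s t : ℝ} (hst : s ≤ t) :
    {r : ℝ | 0 ≤ r ∧ ∃ α β : ℝ → ℝ, IsRepar α ∧ IsRepar β ∧
      ∀ u ∈ Icc (0:ℝ) 1, ‖segCurve a b (α u) - subcurve p s t (β u)‖ ≤ r}.Nonempty := by
  set N := ⌊t⌋₊ with hN
  have hne : (Finset.range (N+2)).Nonempty := ⟨0, by simp⟩
  set M := (Finset.range (N+2)).sup' hne (fun n => ‖p n‖) with hMdef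
  have hM : ∀ n, n ≤ N+1 → ‖p n‖ ≤ M := fun n hn =>
    Finset.le_sup' (fun n => ‖p n‖) (Finset.mem_range.2 (by omega))
  have hM0 : 0 ≤ M := (norm_nonneg _).trans (hM 0 (by omega))
  have hpoly : ∀ x ∈ Icc s t, ‖polyParam p x‖ ≤ M + (1+|s|)*(2*M) := by
    intro x hx
    have hfl : ⌊x⌋₊ ≤ N := Nat.floor_le_floor hx.2
    have habs : |x - (⌊x⌋₊:ℝ)| ≤ 1 + |s| := by
      rcases le_or_gt 0 x with hx0 | hx0
      · have hf1 : (⌊x⌋₊:ℝ) ≤ x := Nat.floor_le hx0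
        have hf2 : x < ⌊x⌋₊ + 1 := Nat.lt_floor_add_one x
        rw [abs_of_nonneg (by linarith)]
        have := abs_nonneg s; linarith
      · have hz : ⌊x⌋₊ = 0 := Nat.floor_of_nonpos hx0.le
        rw [hz]
        have h1 : s ≤ x := hx.1
        have h2 : -s ≤ |s| := neg_le_abs s
        rw [abs_of_nonpos (by simpa using hx0.le)]
        simp only [Nat.cast_zero, sub_zero] at *
        linarith
    have habs0 : 0 ≤ |x - (⌊x⌋₊:ℝ)| := abs_nonneg _
    have h1 := hM ⌊x⌋₊ (by omega)
    have h2 := hM (⌊x⌋₊+1) (by omega)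
    have h3 : ‖p (⌊x⌋₊+1) - p ⌊x⌋₊‖ ≤ 2*M := (norm_sub_le _ _).trans (by linarith)
    calc ‖polyParam p x‖ ≤ ‖p ⌊x⌋₊‖ + |x - (⌊x⌋₊:ℝ)| * ‖p (⌊x⌋₊+1) - p ⌊x⌋₊‖ := by
          unfold polyParam
          refine (norm_add_le _ _).trans ?_
          rw [norm_smul, Real.norm_eq_abs]
      _ ≤ M + (1+|s|)*(2*M) := by
          nlinarith [mul_le_mul habs h3 (norm_nonneg _) (by positivity : (0:ℝ) ≤ 1 + |s|)]
  refine ⟨‖a‖ + ‖b - a‖ + (M + (1+|s|)*(2*M)), ⟨by positivity, (fun u => u), (fun u => u),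
    isRepar_id, isRepar_id, ?_⟩⟩
  intro u hu
  have hseg : ‖segCurve a b u‖ ≤ ‖a‖ + ‖b - a‖ := by
    unfold segCurve
    refine (norm_add_le _ _).trans ?_
    rw [norm_smul, Real.norm_eq_abs, abs_of_nonneg hu.1]
    nlinarith [norm_nonneg (b - a), hu.2]
  have hx : s + u * (t - s) ∈ Icc s t := by
    constructor
    · nlinarith [hu.1, hu.2]
    · nlinarith [hu.1, hu.2]
  have hsub := hpoly _ hx
  calc ‖segCurve a b u - subcurve p s t u‖ ≤ ‖segCurve a b u‖ + ‖subcurve p s t u‖ :=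
        norm_sub_le _ _
    _ ≤ ‖a‖ + ‖b - a‖ + (M + (1+|s|)*(2*M)) := by
        have : ‖subcurve p s t u‖ = ‖polyParam p (s + u * (t - s))‖ := rfl
        rw [this]; linarith
lemma IsRepar.comp {α W : ℝ → ℝ} (hα : IsRepar α) (hW : IsRepar W) :
    IsRepar (fun u => α (W u)) := by
  refine ⟨hα.1.comp hW.1 (fun x hx => hW.mem_Icc hx), ?_, ?_⟩
  · intro x hx y hy hxy
    exact hα.2.1 (hW.mem_Icc hx) (hW.mem_Icc hy) (hW.2.1 hx hy hxy)
  · show (α ∘ W) '' Icc 0 1 = Icc 0 1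
    rw [image_comp, hW.2.2, hα.2.2]


set_option maxHeartbeats 1000000 in
/-- Farthest-point sufficiency: if the subcurves `P[s,sHat]` and `P[t,tHat]` are line
segments lying within distance `ε` of `p h` and `p i` respectively, and the
link from `p h` to `p i` is within Fréchet distance `ε` of `P[s,t]`, then it is
also within Fréchet distance `ε` of `P[sHat,tHat]`. -/
theorem stmt_10 (p : ℕ → E2) (ε : ℝ) (hε : 0 ≤ ε) (h i : ℕ) (hhi : h < i)
    (s sHat t tHat : ℝ) (h1 : s ≤ sHat) (h2 : sHat ≤ t) (h3 : t ≤ tHat)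
    (ha1 : ∀ u ∈ Icc s sHat, ‖polyParam p u - p h‖ ≤ ε)
    (ha2 : ∃ d : E2, ∀ u ∈ Icc s sHat, polyParam p u = polyParam p s + (u - s) • d)
    (hb1 : ∀ u ∈ Icc t tHat, ‖polyParam p u - p i‖ ≤ ε)
    (hb2 : ∃ d : E2, ∀ u ∈ Icc t tHat, polyParam p u = polyParam p t + (u - t) • d)
    (hc : frechetDist (segCurve (p h) (p i)) (subcurve p s t) ≤ ε) :
    frechetDist (segCurve (p h) (p i)) (subcurve p sHat tHat) ≤ ε := by
  rcases le_or_gt tHat sHat with hdeg | hDpos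
  · -- degenerate: sHat = t = tHat, target curve is constant
    have h4 : sHat = t := le_antisymm h2 (h3.trans hdeg)
    have h5 : t = tHat := le_antisymm h3 (hdeg.trans h2)
    refine frechetDist_le hε (fun u => u) (fun u => u) isRepar_id isRepar_id ?_
    intro u hu
    have heq : subcurve p sHat tHat u = polyParam p sHat := by
      show polyParam p (sHat + u * (tHat - sHat)) = polyParam p sHat
      have : tHat - sHat = 0 := by linarith
      rw [this]; ring_nf
    have e0 : ‖segCurve (p h) (p i) 0 - polyParam p sHat‖ ≤ ε := by
      have := ha1 sHat ⟨h1, le_refl _⟩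
      have hseg0 : segCurve (p h) (p i) 0 = p h := by simp [segCurve]
      rw [hseg0, norm_sub_rev]; exact this
    have e1 : ‖segCurve (p h) (p i) 1 - polyParam p sHat‖ ≤ ε := by
      have := hb1 t ⟨le_refl _, h3⟩
      have hseg1 : segCurve (p h) (p i) 1 = p i := by simp [segCurve]
      rw [hseg1, norm_sub_rev, h4]; exact this
    rw [heq]
    exact (seg_norm_le (p h) (p i) (polyParam p sHat) hu).trans (max_le e0 e1)
  · -- main case
    refine le_of_forall_pos_le_add ?_
    intro δ hδ
    have hst : s ≤ t := h1.trans h2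
    have hne := frechet_set_nonempty p (p h) (p i) hst
    have hbdd : BddBelow {r : ℝ | 0 ≤ r ∧ ∃ α β : ℝ → ℝ, IsRepar α ∧ IsRepar β ∧
        ∀ u ∈ Icc (0:ℝ) 1, ‖segCurve (p h) (p i) (α u) - subcurve p s t (β u)‖ ≤ r} :=
      ⟨0, fun _ hx => hx.1⟩
    have hlt : frechetDist (segCurve (p h) (p i)) (subcurve p s t) < ε + δ :=
      lt_of_le_of_lt hc (by linarith)
    rw [frechetDist] at hlt
    obtain ⟨r, hrmem, hrlt⟩ := (csInf_lt_iff hbdd hne).1 hlt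
    obtain ⟨hr0, α, β, hα, hβ, hbound⟩ := hrmem
    -- find u₀ with s + β u₀ * (t - s) = sHat
    have hv : ∃ v ∈ Icc (0:ℝ) 1, s + v * (t - s) = sHat := by
      rcases eq_or_lt_of_le hst with he | hlt'
      · refine ⟨0, ⟨le_refl _, zero_le_one⟩, ?_⟩
        have : s = sHat := le_antisymm h1 (h2.trans he.symm.le)
        rw [← this]; ring
      · refine ⟨(sHat - s)/(t - s), ⟨div_nonneg (by linarith) (by linarith),
          (div_le_one (by linarith)).2 (by linarith)⟩, ?_⟩
        rw [div_mul_cancel₀ _ (ne_of_gt (show (0:ℝ) < t - s by linarith))]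
        ring
    obtain ⟨v₀, hv₀, hv₀eq⟩ := hv
    obtain ⟨u₀, hu₀mem, hu₀⟩ : ∃ u₀ ∈ Icc (0:ℝ) 1, β u₀ = v₀ := by
      have : v₀ ∈ β '' Icc 0 1 := by rw [hβ.2.2]; exact hv₀
      obtain ⟨u₀, hm, he⟩ := this; exact ⟨u₀, hm, he⟩
    have hkey : s + β u₀ * (t - s) = sHat := by rw [hu₀]; exact hv₀eq
    have hD0 : (0:ℝ) < tHat - sHat := by linarith
    set W : ℝ → ℝ := fun u => u₀ * min (3*u) 1 + (1-u₀) * min (max (3*u-1) 0) 1 with hW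
    have hu₀0 : 0 ≤ u₀ := hu₀mem.1
    have hu₀1 : u₀ ≤ 1 := hu₀mem.2
    have hWmono : Monotone W := by
      intro x y hxy
      simp only [hW]
      gcongr <;> linarith
    have hW0 : W 0 = 0 := by norm_num [hW]
    have hW1 : W 1 = 1 := by norm_num [hW]
    have hWcont : Continuous W := by
      apply Continuous.add
      · exact continuous_const.mul ((continuous_const.mul continuous_id).min continuous_const)
      · exact continuous_const.mul
          ((((continuous_const.mul continuous_id).sub continuous_const).max
            continuous_const).min continuous_const)
    have hWrep : IsRepar W := isRepar_of_endpoints hWcont.continuousOn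
      (hWmono.monotoneOn _) hW0 hW1
    have hArep : IsRepar (fun u => α (W u)) := hα.comp hWrep
    set B : ℝ → ℝ := fun u => max 0 ((s + β (W u) * (t-s) - sHat)/(tHat - sHat))
      + ((tHat - t)/(tHat - sHat)) * max 0 (3*u-2) with hB
    have hβW : ContinuousOn (fun u => β (W u)) (Icc 0 1) :=
      hβ.1.comp hWcont.continuousOn (fun x hx => hWrep.mem_Icc hx)
    have hBcont : ContinuousOn B (Icc 0 1) := by
      apply ContinuousOn.add
      · exact (continuous_const.max continuous_id).comp_continuousOn
          (((continuousOn_const.add (hβW.mul continuousOn_const)).sub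
            continuousOn_const).div_const _)
      · exact continuousOn_const.mul
          ((continuous_const.max (by fun_prop)).continuousOn)
    have hBmono : MonotoneOn B (Icc 0 1) := by
      intro x hx y hy hxy
      have hβ' : β (W x) ≤ β (W y) :=
        hβ.2.1 (hWrep.mem_Icc hx) (hWrep.mem_Icc hy) (hWmono hxy)
      simp only [hB]
      apply add_le_add
      · refine max_le_max le_rfl ((div_le_div_iff_of_pos_right hD0).2 ?_)
        nlinarith
      · exact mul_le_mul_of_nonneg_left (max_le_max le_rfl (by linarith))
          (div_nonneg (by linarith) (by linarith))
    have hB0 : B 0 = 0 := by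
      simp only [hB]
      have e1 : max (0:ℝ) ((s + β (W 0) * (t-s) - sHat)/(tHat - sHat)) = 0 := by
        rw [hW0, hβ.map_zero]
        exact max_eq_left (div_nonpos_iff.2 (Or.inr ⟨by linarith, hD0.le⟩))
      have e2 : max (0:ℝ) (3*(0:ℝ)-2) = 0 := by norm_num
      rw [e1, e2]
      ring
    have hB1 : B 1 = 1 := by
      simp only [hB, hW1, hβ.map_one]
      rw [show s + 1 * (t - s) - sHat = t - sHat by ring,
        max_eq_right (div_nonneg (by linarith) hD0.le),
        max_eq_right (by norm_num : (0:ℝ) ≤ 3*1-2)]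
      field_simp
      ring
    have hBrep : IsRepar B := isRepar_of_endpoints hBcont hBmono hB0 hB1
    have hmax0 : 0 ≤ max ε r := le_trans hε (le_max_left _ _)
    refine (frechetDist_le hmax0 _ B hArep hBrep ?_).trans
      (max_le (by linarith) hrlt.le)
    intro u hu
    have hx : W u ∈ Icc (0:ℝ) 1 := hWrep.mem_Icc hu
    rcases le_or_gt (3*u-2) 0 with h32 | h32
    · -- first two phases
      have hmax2 : max 0 (3*u-2) = 0 := max_eq_left h32
      rcases le_or_gt 0 (s + β (W u) * (t - s) - sHat) with hN | hN
      · have hBu : B u = (s + β (W u) * (t - s) - sHat)/(tHat - sHat) := by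
          simp only [hB, hmax2, mul_zero, add_zero]
          exact max_eq_right (div_nonneg hN hD0.le)
        have hsub : subcurve p sHat tHat (B u) = subcurve p s t (β (W u)) := by
          show polyParam p (sHat + B u * (tHat - sHat)) = polyParam p (s + β (W u) * (t - s))
          congr 1
          rw [hBu, div_mul_cancel₀ _ (ne_of_gt hD0)]
          ring
        rw [hsub]
        exact (hbound (W u) hx).trans (le_max_right _ _)
      · -- before sHat : match with start point of new curve
        have hBu : B u = 0 := by
          simp only [hB, hmax2, mul_zero, add_zero]
          exact max_eq_left (div_nonpos_iff.2 (Or.inr ⟨by linarith, hD0.le⟩))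
        have hts : s < t := by
          rcases eq_or_lt_of_le hst with he | hlt'
          · exfalso
            have hs1 : s = sHat := le_antisymm h1 (h2.trans he.symm.le)
            rw [← he, hs1] at hN
            simp at hN
          · exact hlt'
        have hβlt : β (W u) < β u₀ := by
          have : β (W u) * (t - s) < β u₀ * (t - s) := by nlinarith [hkey]
          exact lt_of_mul_lt_mul_right this (by linarith)
        have hWlt : W u ≤ u₀ := by
          by_contra hcon
          push_neg at hcon
          exact absurd (hβ.2.1 hu₀mem hx hcon.le) (not_le.2 hβlt)
        have hαle : α (W u) ≤ α u₀ := hα.2.1 hx hu₀mem hWlt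
        have hα0 : 0 ≤ α (W u) := (hα.mem_Icc hx).1
        have hcv := seg_norm_le (p h) (p i) (polyParam p sHat) (v₀ := 0) (v₁ := α u₀)
          ⟨hα0, hαle⟩
        have e0 : ‖segCurve (p h) (p i) 0 - polyParam p sHat‖ ≤ ε := by
          have := ha1 sHat ⟨h1, le_refl _⟩
          have hseg0 : segCurve (p h) (p i) 0 = p h := by simp [segCurve]
          rw [hseg0, norm_sub_rev]; exact this
        have e1 : ‖segCurve (p h) (p i) (α u₀) - polyParam p sHat‖ ≤ r := by
          have hb := hbound u₀ hu₀mem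
          have : subcurve p s t (β u₀) = polyParam p sHat := by
            show polyParam p (s + β u₀ * (t - s)) = polyParam p sHat
            rw [hkey]
          rwa [this] at hb
        have hsub0 : subcurve p sHat tHat (B u) = polyParam p sHat := by
          show polyParam p (sHat + B u * (tHat - sHat)) = polyParam p sHat
          rw [hBu]; ring_nf
        rw [hsub0]
        exact hcv.trans (max_le (e0.trans (le_max_left ε r)) (e1.trans (le_max_right ε r)))
    · -- last phase
      have hWu : W u = 1 := by
        have hm1 : min (3*u) 1 = 1 := min_eq_right (by linarith)
        have hm2 : min (max (3*u-1) 0) 1 = 1 :=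
          min_eq_right (le_max_of_le_left (by linarith))
        simp only [hW, hm1, hm2]; ring
      have hA1 : α (W u) = 1 := by rw [hWu, hα.map_one]
      have hseg1 : segCurve (p h) (p i) 1 = p i := by simp [segCurve]
      have hβ1 : β (W u) = 1 := by rw [hWu, hβ.map_one]
      have hNval : s + β (W u) * (t-s) - sHat = t - sHat := by rw [hβ1]; ring
      have hmaxN : max 0 ((s + β (W u) * (t-s) - sHat)/(tHat - sHat))
          = (t - sHat)/(tHat - sHat) := by
        rw [hNval]
        exact max_eq_right (div_nonneg (by linarith) hD0.le)
      have hmax2 : max 0 (3*u - 2) = 3*u-2 := max_eq_right h32.le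
      have hBu : B u = (t - sHat)/(tHat - sHat) + ((tHat - t)/(tHat - sHat)) * (3*u-2) := by
        simp only [hB, hmaxN, hmax2]
      have hparam : sHat + B u * (tHat - sHat) = t + (3*u-2)*(tHat - t) := by
        rw [hBu]; field_simp; ring
      have hmem : t + (3*u-2)*(tHat - t) ∈ Icc t tHat := by
        constructor
        · nlinarith [hu.2]
        · nlinarith [hu.2]
      have hbi := hb1 _ hmem
      have hsub : subcurve p sHat tHat (B u) = polyParam p (t + (3*u-2)*(tHat - t)) := by
        show polyParam p (sHat + B u * (tHat - sHat)) = _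
        rw [hparam]
      rw [hsub, hA1, hseg1, norm_sub_rev]
      exact hbi.trans (le_max_left ε r)
end

section
/- Douglas–Peucker full Hausdorff correctness: with the Douglas–Peucker simplification as defined (recursively splitting at a farthest vertex until all intermediate vertices are within ε of the spanning segment), every point of the input polyline (all points on all segments p_ip_{i+1}, not only vertices) lies within distance ε of the output polyline, and every point of the output polyline lies on the input polyline or within distance ε of it; hence the undirected Hausdorff distance between input and output polylines is at most ε. -/
open Set

/-- The Douglas–Peucker recursion on vertex indices, with a fuel parameter
(taking fuel `j - i` suffices). If every vertex `p m` with `i ≤ m ≤ j` is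
within distance `ε` of the segment `p i p j` (or there is no intermediate
vertex), output `{i, j}`; otherwise split at an intermediate vertex farthest
from that segment and recurse on the two halves. -/
noncomputable def dp (p : ℕ → E2) (ε : ℝ) : ℕ → ℕ → ℕ → Finset ℕ
  | 0, i, j => {i, j}
  | fuel + 1, i, j =>
    if h : (∀ m ∈ Finset.Icc i j,
          Metric.infDist (p m) (segment ℝ (p i) (p j)) ≤ ε) ∨
        ¬(Finset.Ioo i j).Nonempty then {i, j}
    else
      let f := Classical.choose (Finset.exists_max_image (Finset.Ioo i j)
        (fun m => Metric.infDist (p m) (segment ℝ (p i) (p j)))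
        (not_not.mp (not_or.mp h).2))
      dp p ε fuel i f ∪ dp p ε fuel f j

/-- The output polyline: the union of the segments joining consecutive
(in index order) selected vertices. -/
def outSet (p : ℕ → E2) (Q : Finset ℕ) : Set E2 :=
  ⋃ i ∈ Q, ⋃ j ∈ Q,
    {x | i < j ∧ (∀ l ∈ Q, l ≤ i ∨ j ≤ l) ∧ x ∈ segment ℝ (p i) (p j)}

/-- The input polyline on vertices `p 0, …, p n`. -/
def inSet (p : ℕ → E2) (n : ℕ) : Set E2 :=
  ⋃ i ∈ Finset.range n, segment ℝ (p i) (p (i + 1))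

lemma key_convex {S : Set E2} (hS : S.Nonempty) (hconv : Convex ℝ S) {u v : E2} {ε : ℝ}
    (hu : Metric.infDist u S ≤ ε) (hv : Metric.infDist v S ≤ ε) :
    ∀ x ∈ segment ℝ u v, Metric.infDist x S ≤ ε := by
  rintro x ⟨s, t, hs, ht, hst, rfl⟩
  refine le_of_forall_pos_le_add fun η hη => ?_
  obtain ⟨yu, hyu, hdu⟩ := (Metric.infDist_lt_iff hS).mp
    (lt_of_le_of_lt hu (lt_add_of_pos_right ε hη))
  obtain ⟨yv, hyv, hdv⟩ := (Metric.infDist_lt_iff hS).mp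
    (lt_of_le_of_lt hv (lt_add_of_pos_right ε hη))
  have hmem : s • yu + t • yv ∈ S := hconv hyu hyv hs ht hst
  have h1 : dist (s • u + t • v) (s • yu + t • yv) ≤ s * dist u yu + t * dist v yv := by
    have : s • u + t • v - (s • yu + t • yv) = s • (u - yu) + t • (v - yv) := by
      simp [smul_sub]; abel
    rw [dist_eq_norm, this]
    calc ‖s • (u - yu) + t • (v - yv)‖ ≤ ‖s • (u - yu)‖ + ‖t • (v - yv)‖ := norm_add_le _ _
      _ = s * dist u yu + t * dist v yv := by
          rw [norm_smul, norm_smul, Real.norm_of_nonneg hs, Real.norm_of_nonneg ht,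
            dist_eq_norm, dist_eq_norm]
  calc Metric.infDist (s • u + t • v) S ≤ dist (s • u + t • v) (s • yu + t • yv) :=
        Metric.infDist_le_dist_of_mem hmem
    _ ≤ s * dist u yu + t * dist v yv := h1
    _ ≤ s * (ε + η) + t * (ε + η) :=
        add_le_add (mul_le_mul_of_nonneg_left hdu.le hs) (mul_le_mul_of_nonneg_left hdv.le ht)
    _ = ε + η := by rw [← add_mul, hst, one_mul]

lemma discrete_ivt (T : ℕ → ℝ) (a b : ℕ) (hab : a < b) (c : ℝ)
    (ha : T a ≤ c) (hb : c ≤ T b) :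
    ∃ m, a ≤ m ∧ m < b ∧ T m ≤ c ∧ c ≤ T (m + 1) := by
  induction b with
  | zero => omega
  | succ b ih =>
    rcases Nat.lt_or_ge a b with h | h
    · by_cases hc : T b ≤ c
      · exact ⟨b, by omega, by omega, hc, hb⟩
      · obtain ⟨m, h1, h2, h3, h4⟩ := ih h (le_of_lt (lt_of_not_ge hc))
        exact ⟨m, h1, by omega, h3, h4⟩
    · have : a = b := by omega
      exact ⟨a, le_rfl, by omega, ha, this ▸ hb⟩

lemma dp_spec (p : ℕ → E2) (ε : ℝ) (hε : 0 ≤ ε) :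
    ∀ fuel i j, i < j → j - i ≤ fuel →
      i ∈ dp p ε fuel i j ∧ j ∈ dp p ε fuel i j ∧ dp p ε fuel i j ⊆ Finset.Icc i j ∧
      ∀ a ∈ dp p ε fuel i j, ∀ b ∈ dp p ε fuel i j, a < b →
        (∀ l ∈ dp p ε fuel i j, l ∉ Finset.Ioo a b) →
        ∀ m ∈ Finset.Icc a b, Metric.infDist (p m) (segment ℝ (p a) (p b)) ≤ ε := by
  intro fuel
  induction fuel with
  | zero => intro i j hij hfuel; omega
  | succ fuel ih =>
    intro i j hij hfuel
    by_cases h : (∀ m ∈ Finset.Icc i j,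
          Metric.infDist (p m) (segment ℝ (p i) (p j)) ≤ ε) ∨ ¬(Finset.Ioo i j).Nonempty
    · rw [dp, dif_pos h]
      refine ⟨by simp, by simp, ?_, ?_⟩
      · intro l hl
        simp only [Finset.mem_insert, Finset.mem_singleton] at hl
        rcases hl with rfl | rfl <;> simp [Finset.mem_Icc] <;> omega
      · intro a ha b hb hab _ m hm
        simp only [Finset.mem_insert, Finset.mem_singleton] at ha hb
        have hai : a = i := by rcases ha with rfl | rfl <;> rcases hb with rfl | rfl <;> omega
        have hbj : b = j := by rcases ha with rfl | rfl <;> rcases hb with rfl | rfl <;> omega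
        subst hai; subst hbj
        rcases h with h | h
        · exact h m hm
        · have hj : b = a + 1 := by
            by_contra h'
            exact h ⟨a + 1, Finset.mem_Ioo.mpr (by omega)⟩
          simp only [Finset.mem_Icc] at hm
          rcases (show m = a ∨ m = b by omega) with rfl | rfl
          · rw [Metric.infDist_zero_of_mem (left_mem_segment ℝ _ _)]; exact hε
          · rw [Metric.infDist_zero_of_mem (right_mem_segment ℝ _ _)]; exact hε
    · rw [dp, dif_neg h]
      set f := Classical.choose (Finset.exists_max_image (Finset.Ioo i j)
        (fun m => Metric.infDist (p m) (segment ℝ (p i) (p j)))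
        (not_not.mp (not_or.mp h).2)) with hfdef
      have hfspec := Classical.choose_spec (Finset.exists_max_image (Finset.Ioo i j)
        (fun m => Metric.infDist (p m) (segment ℝ (p i) (p j)))
        (not_not.mp (not_or.mp h).2))
      rw [← hfdef] at hfspec
      have hf : i < f ∧ f < j := Finset.mem_Ioo.mp hfspec.1
      obtain ⟨h1i, h1f, h1sub, h1c⟩ := ih i f hf.1 (by omega)
      obtain ⟨h2f, h2j, h2sub, h2c⟩ := ih f j hf.2 (by omega)
      simp only
      refine ⟨Finset.mem_union_left _ h1i, Finset.mem_union_right _ h2j, ?_, ?_⟩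
      · intro l hl
        rcases Finset.mem_union.mp hl with hl | hl
        · have := Finset.mem_Icc.mp (h1sub hl); simp [Finset.mem_Icc]; omega
        · have := Finset.mem_Icc.mp (h2sub hl); simp [Finset.mem_Icc]; omega
      · intro a ha b hb hab hno m hm
        have hfQ1 : f ∈ dp p ε fuel i f := h1f
        have hfQ2 : f ∈ dp p ε fuel f j := h2f
        rcases le_or_gt b f with hbf | hfb
        · have ha1 : a ∈ dp p ε fuel i f := by
            rcases Finset.mem_union.mp ha with h' | h'
            · exact h'
            · have := (Finset.mem_Icc.mp (h2sub h')).1; omega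
          have hb1 : b ∈ dp p ε fuel i f := by
            rcases Finset.mem_union.mp hb with h' | h'
            · exact h'
            · have := (Finset.mem_Icc.mp (h2sub h')).1
              have : b = f := by omega
              exact this ▸ hfQ1
          exact h1c a ha1 b hb1 hab
            (fun l hl => hno l (Finset.mem_union_left _ hl)) m hm
        · rcases le_or_gt f a with hfa | haf
          · have ha2 : a ∈ dp p ε fuel f j := by
              rcases Finset.mem_union.mp ha with h' | h'
              · have := (Finset.mem_Icc.mp (h1sub h')).2
                have : a = f := by omega
                exact this ▸ hfQ2
              · exact h'
            have hb2 : b ∈ dp p ε fuel f j := by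
              rcases Finset.mem_union.mp hb with h' | h'
              · have := (Finset.mem_Icc.mp (h1sub h')).2; omega
              · exact h'
            exact h2c a ha2 b hb2 hab
              (fun l hl => hno l (Finset.mem_union_right _ hl)) m hm
          · exact absurd (Finset.mem_Ioo.mpr ⟨haf, hfb⟩)
              (hno f (Finset.mem_union_left _ hfQ1))

lemma exists_consec {Q : Finset ℕ} {n : ℕ} (h0 : 0 ∈ Q) (hn : n ∈ Q) {i : ℕ} (hi : i < n) :
    ∃ a ∈ Q, ∃ b ∈ Q, a ≤ i ∧ i + 1 ≤ b ∧ a < b ∧ ∀ l ∈ Q, l ∉ Finset.Ioo a b := by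
  have hA : (Q.filter (· ≤ i)).Nonempty := ⟨0, Finset.mem_filter.mpr ⟨h0, by simp⟩⟩
  have hB : (Q.filter (i < ·)).Nonempty := ⟨n, Finset.mem_filter.mpr ⟨hn, by simpa⟩⟩
  have haQ := Finset.mem_filter.mp ((Q.filter (· ≤ i)).max'_mem hA)
  have hbQ := Finset.mem_filter.mp ((Q.filter (i < ·)).min'_mem hB)
  refine ⟨_, haQ.1, _, hbQ.1, haQ.2, by have := hbQ.2; omega,
    by have := haQ.2; have := hbQ.2; omega, ?_⟩
  intro l hl hmem
  rw [Finset.mem_Ioo] at hmem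
  rcases le_or_gt l i with h' | h'
  · have := Finset.le_max' (Q.filter (· ≤ i)) l (Finset.mem_filter.mpr ⟨hl, by simpa⟩)
    omega
  · have := Finset.min'_le (Q.filter (i < ·)) l (Finset.mem_filter.mpr ⟨hl, by simpa⟩)
    omega

lemma seg_subset_outSet (p : ℕ → E2) (Q : Finset ℕ) {a b : ℕ} (ha : a ∈ Q) (hb : b ∈ Q)
    (hab : a < b) (hno : ∀ l ∈ Q, l ∉ Finset.Ioo a b) :
    segment ℝ (p a) (p b) ⊆ outSet p Q := by
  intro z hz
  simp only [outSet, Set.mem_iUnion, Set.mem_setOf_eq]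
  refine ⟨a, ha, b, hb, hab, fun l hl => ?_, hz⟩
  have := hno l hl
  rw [Finset.mem_Ioo] at this
  omega

/-- Douglas–Peucker full Hausdorff correctness: every point of the input
polyline is within `ε` of the output polyline, and every point of the output
polyline is within `ε` of the input polyline; hence the undirected Hausdorff
distance between input and output is at most `ε`. -/
theorem stmt_14 (p : ℕ → E2) (n : ℕ) (hn : 1 ≤ n) (ε : ℝ) (hε : 0 ≤ ε) :
    (∀ x ∈ inSet p n, Metric.infDist x (outSet p (dp p ε n 0 n)) ≤ ε) ∧
    (∀ x ∈ outSet p (dp p ε n 0 n), Metric.infDist x (inSet p n) ≤ ε) := by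
  obtain ⟨h0Q, hnQ, hsub, hconsecP⟩ := dp_spec p ε hε n 0 n (by omega) (by omega)
  constructor
  · intro x hx
    simp only [inSet, Set.mem_iUnion, Finset.mem_range] at hx
    obtain ⟨i, hi, hxseg⟩ := hx
    obtain ⟨a, haQ, b, hbQ, hai, hib, hab, hno⟩ := exists_consec h0Q hnQ hi
    have hSne : (segment ℝ (p a) (p b)).Nonempty := ⟨p a, left_mem_segment ℝ _ _⟩
    have hu := hconsecP a haQ b hbQ hab hno i (Finset.mem_Icc.mpr ⟨hai, by omega⟩)
    have hv := hconsecP a haQ b hbQ hab hno (i + 1) (Finset.mem_Icc.mpr ⟨by omega, hib⟩)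
    have hxd := key_convex hSne (convex_segment _ _) hu hv x hxseg
    exact le_trans (Metric.infDist_le_infDist_of_subset
      (seg_subset_outSet p _ haQ hbQ hab hno) hSne) hxd
  · intro x hx
    simp only [outSet, Set.mem_iUnion, Set.mem_setOf_eq] at hx
    obtain ⟨a, haQ, b, hbQ, hab, hcons, hxseg⟩ := hx
    have hno : ∀ l ∈ dp p ε n 0 n, l ∉ Finset.Ioo a b := by
      intro l hl hmem
      have := hcons l hl
      rw [Finset.mem_Ioo] at hmem
      omega
    have hbn : b ≤ n := (Finset.mem_Icc.mp (hsub hbQ)).2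
    have hseg : ∀ m ∈ Finset.Icc a b, Metric.infDist (p m) (segment ℝ (p a) (p b)) ≤ ε :=
      hconsecP a haQ b hbQ hab hno
    by_cases hv : p b - p a = 0
    · have hpb : p b = p a := by rwa [sub_eq_zero] at hv
      rw [hpb, segment_same] at hxseg
      have hxa : x = p a := hxseg
      have hmem : p a ∈ inSet p n := by
        simp only [inSet, Set.mem_iUnion, Finset.mem_range]
        exact ⟨a, by omega, left_mem_segment ℝ _ _⟩
      rw [hxa, Metric.infDist_zero_of_mem hmem]; exact hε
    · set v := p b - p a with hvdef
      rw [segment_eq_image'] at hxseg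
      obtain ⟨t, ⟨ht0, ht1⟩, hxeq⟩ := hxseg
      set T : ℕ → ℝ := fun m => inner ℝ v (p m - p a) with hT
      set c : ℝ := t * ‖v‖ ^ 2 with hc
      have hv2pos : (0 : ℝ) < ‖v‖ ^ 2 := pow_pos (norm_pos_iff.mpr hv) 2
      have hTa : T a = 0 := by simp [hT]
      have hTb : T b = ‖v‖ ^ 2 := by
        simp only [hT]
        rw [← hvdef, real_inner_self_eq_norm_sq]
      obtain ⟨m, ham, hmb, hTm, hTm1⟩ := discrete_ivt T a b hab c
        (by rw [hTa, hc]; exact mul_nonneg ht0 (by positivity))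
        (by rw [hTb, hc]; nlinarith)
      have hTaff : ∀ s : ℝ, (inner ℝ v ((p m + s • (p (m + 1) - p m)) - p a) : ℝ)
          = T m + s * (T (m + 1) - T m) := by
        intro s
        have e : p m + s • (p (m + 1) - p m) - p a
            = (p m - p a) + s • ((p (m + 1) - p a) - (p m - p a)) := by module
        rw [e]
        simp only [hT, inner_add_right, inner_sub_right, real_inner_smul_right]
      obtain ⟨y, hyseg, hyc⟩ : ∃ y ∈ segment ℝ (p m) (p (m + 1)),
          (inner ℝ v (y - p a) : ℝ) = c := by
        by_cases heq : T (m + 1) = T m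
        · have hceq : c = T m := le_antisymm (heq ▸ hTm1) hTm
          refine ⟨p m, left_mem_segment ℝ _ _, ?_⟩
          have : (inner ℝ v (p m - p a) : ℝ) = T m := by simp [hT]
          rw [this, ← hceq]
        · have hlt : T m < T (m + 1) := lt_of_le_of_ne (le_trans hTm hTm1) (Ne.symm heq)
          refine ⟨p m + ((c - T m) / (T (m + 1) - T m)) • (p (m + 1) - p m), ?_, ?_⟩
          · rw [segment_eq_image']
            refine ⟨(c - T m) / (T (m + 1) - T m),
              ⟨div_nonneg (by linarith) (by linarith), ?_⟩, rfl⟩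
            rw [div_le_one (by linarith)]; linarith
          · rw [hTaff, div_mul_cancel₀ _ (sub_ne_zero.mpr heq)]
            ring
      have hyε : Metric.infDist y (segment ℝ (p a) (p b)) ≤ ε :=
        key_convex ⟨p a, left_mem_segment ℝ _ _⟩ (convex_segment _ _)
          (hseg m (Finset.mem_Icc.mpr ⟨ham, by omega⟩))
          (hseg (m + 1) (Finset.mem_Icc.mpr ⟨by omega, by omega⟩)) y hyseg
      have hyin : y ∈ inSet p n := by
        simp only [inSet, Set.mem_iUnion, Finset.mem_range]
        exact ⟨m, by omega, hyseg⟩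
      have hxv : ∀ z ∈ segment ℝ (p a) (p b), dist x y ≤ dist y z := by
        intro z hz
        rw [segment_eq_image'] at hz
        obtain ⟨u, ⟨hu0, hu1⟩, hzeq⟩ := hz
        have hxeq' : p a + t • (p b - p a) = x := hxeq
        have hzeq' : p a + u • (p b - p a) = z := hzeq
        have hxpa : x - p a = t • v := by
          rw [hvdef, ← hxeq']; abel
        have horth : (inner ℝ v (y - x) : ℝ) = 0 := by
          have e : y - x = (y - p a) - (x - p a) := by abel
          rw [e, inner_sub_right, hyc, hxpa, real_inner_smul_right,
            real_inner_self_eq_norm_sq, hc]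
          ring
        have hxz : x - z = (t - u) • v := by
          rw [hvdef, ← hxeq', ← hzeq']; module
        have key : ‖y - z‖ ^ 2 = ‖y - x‖ ^ 2 + ‖x - z‖ ^ 2 := by
          have hyz : y - z = (y - x) + (x - z) := by abel
          have hz0 : (inner ℝ (y - x) (x - z) : ℝ) = 0 := by
            rw [hxz, real_inner_smul_right, real_inner_comm, horth]; ring
          rw [hyz, norm_add_sq_real, hz0]; ring
        have h1 : ‖y - x‖ ≤ ‖y - z‖ := by
          nlinarith [norm_nonneg (y - z), norm_nonneg (y - x), norm_nonneg (x - z)]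
        rw [dist_eq_norm, dist_eq_norm, norm_sub_rev x y]
        exact h1
      have hdxy : dist x y ≤ Metric.infDist y (segment ℝ (p a) (p b)) := by
        by_contra hcon
        push_neg at hcon
        obtain ⟨z, hz, hdz⟩ := (Metric.infDist_lt_iff ⟨p a, left_mem_segment ℝ _ _⟩).mp hcon
        exact absurd (hxv z hz) (by linarith)
      calc Metric.infDist x (inSet p n) ≤ dist x y := Metric.infDist_le_dist_of_mem hyin
        _ ≤ ε := le_trans hdxy hyε
end
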